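/- Let N ≥ 3 and let P be the symmetric simple random walk on the N-cycle, i.e., the N×N matrix with P_{ij} = 1/2 if j ≡ i±1 (mod N) and P_{ij} = 0 otherwise. If M is a mean first passage time matrix of P, then Σ_{i≠j} M_{ij} = (N⁴ − N²)/6; hence the upper bound (N⁴ − N²)/6 on the minimal total mean first passage times over reversible chains on a Hamiltonian graph is attained by the cycle random walk. -/

import Mathlib

open Matrix Finset

/-- An N×N real matrix is row-stochastic: nonnegative entries, each row sums to 1. -/
def IsRowStochastic {N : ℕ} (P : Matrix (Fin N) (Fin N) ℝ) : Prop :=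
  (∀ i j, 0 ≤ P i j) ∧ ∀ i, ∑ j, P i j = 1

/-- Irreducibility: for all i, j there is k ≥ 1 with (P^k)_{ij} > 0. -/
def IsIrreducibleMC {N : ℕ} (P : Matrix (Fin N) (Fin N) ℝ) : Prop :=
  ∀ i j, ∃ k : ℕ, 1 ≤ k ∧ 0 < (P ^ k) i j

/-- M is a mean first passage time matrix of P. -/
def IsMFPT {N : ℕ} (P M : Matrix (Fin N) (Fin N) ℝ) : Prop :=
  ∀ i j, M i j = 1 + ∑ k ∈ Finset.univ.filter (fun k => k ≠ j), P i k * M k j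

theorem cycle_rec (m : ℕ) (P M : Matrix (Fin (m+3)) (Fin (m+3)) ℝ)
    (hP : ∀ i j : Fin (m+3), P i j =
      if (j : ℕ) = ((i : ℕ) + 1) % (m+3) ∨ (j : ℕ) = ((i : ℕ) + (m+3) - 1) % (m+3)
      then (1 : ℝ) / 2 else 0)
    (hM : ∀ i j, M i j = 1 + ∑ k ∈ Finset.univ.filter (fun k => k ≠ j), P i k * M k j)
    (i j : Fin (m+3)) :
    M i j = 1 + ((if i+1 ≠ j then (1/2)*M (i+1) j else 0)
      + (if i-1 ≠ j then (1/2)*M (i-1) j else 0)) := by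
  have hne : i + 1 ≠ i - 1 := by
    intro h
    have h2 : i + 1 + 1 = i := by rw [h]; exact sub_add_cancel i 1
    have h3 : i + (1 + 1) = i + 0 := by rw [← add_assoc, h2, add_zero]
    have h4 := add_left_cancel h3
    have h5 : ((1 + 1 : Fin (m+3)) : ℕ) = 2 := by
      rw [Fin.add_def]; simp [Nat.mod_eq_of_lt]
    rw [h4] at h5
    simp at h5
  have hc1 : ∀ k : Fin (m+3), ((k:ℕ) = ((i:ℕ)+1) % (m+3) ↔ k = i+1) := by
    intro k
    rw [Fin.ext_iff, Fin.add_def, Fin.val_one]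
  have hc2 : ∀ k : Fin (m+3), ((k:ℕ) = ((i:ℕ)+(m+3)-1) % (m+3) ↔ k = i-1) := by
    intro k
    rw [Fin.ext_iff, Fin.sub_def, Fin.val_one]
    congr! 2
    omega
  rw [hM i j]
  congr 1
  have key : ∀ k ∈ Finset.univ.filter (fun k => k ≠ j), P i k * M k j =
      (if k = i+1 then (1/2)*M k j else 0) + (if k = i-1 then (1/2)*M k j else 0) := by
    intro k _
    rw [hP i k]; simp only [hc1, hc2]
    by_cases h1 : k = i + 1
    · rw [if_pos (Or.inl h1), if_pos h1, if_neg (fun h2 => hne (h1.symm.trans h2))]; ring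
    · by_cases h2 : k = i - 1
      · rw [if_pos (Or.inr h2), if_neg h1, if_pos h2]; ring
      · rw [if_neg (by tauto), if_neg h1, if_neg h2]; ring
  rw [Finset.sum_congr rfl key, Finset.sum_add_distrib, sum_ite_eq', sum_ite_eq']
  simp only [Finset.mem_filter, Finset.mem_univ, true_and]

open Fin.NatCast Fin.CommRing in
theorem cycle_col (m : ℕ) (M : Matrix (Fin (m+3)) (Fin (m+3)) ℝ)
    (hrec : ∀ i j, M i j = 1 + ((if i+1 ≠ j then (1/2)*M (i+1) j else 0)
      + (if i-1 ≠ j then (1/2)*M (i-1) j else 0)))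
    (j : Fin (m+3)) :
    ∀ d : ℕ, 1 ≤ d → d ≤ m+2 →
      M (j + (d : Fin (m+3))) j = (d : ℝ) * ((m+3 : ℝ) - (d : ℝ)) := by
  set g : ℕ → ℝ := fun d => M (j + (d : Fin (m+3))) j with hg
  set h : ℕ → ℝ := fun d => if d = 0 ∨ d = m+3 then 0 else g d - d*(((m:ℝ)+3) - d) with hh
  have hker : ∀ e : ℕ, (j + (e : Fin (m+3)) = j ↔ (m+3) ∣ e) := by
    intro e; rw [add_eq_left, Fin.natCast_eq_zero]
  have grec : ∀ d : ℕ, 1 ≤ d → d ≤ m+2 →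
      g d = 1 + ((if d = m+2 then 0 else (2⁻¹:ℝ) * g (d+1))
        + (if d = 1 then 0 else (2⁻¹:ℝ) * g (d-1))) := by
    intro d hd1 hd2
    have e1 : (j + (d : Fin (m+3))) + 1 = j + ((d+1 : ℕ) : Fin (m+3)) := by push_cast; ring
    have e2 : (j + (d : Fin (m+3))) - 1 = j + ((d-1 : ℕ) : Fin (m+3)) := by
      have hd : d = (d-1) + 1 := by omega
      rw [hd]; push_cast; ring_nf
    have c1 : ((j + (d : Fin (m+3))) + 1 ≠ j) ↔ d ≠ m+2 := by
      rw [e1, Ne, hker]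
      constructor
      · intro hnd heq; exact hnd ⟨1, by omega⟩
      · intro hnd hdvd
        have := Nat.le_of_dvd (by omega) hdvd
        omega
    have c2 : ((j + (d : Fin (m+3))) - 1 ≠ j) ↔ d ≠ 1 := by
      rw [e2, Ne, hker]
      constructor
      · intro hnd heq; exact hnd ⟨0, by omega⟩
      · intro hnd hdvd
        have := Nat.eq_zero_of_dvd_of_lt hdvd
        omega
    have key := hrec (j + (d : Fin (m+3))) j
    simp only [c1, c2] at key
    rw [e1, e2] at key
    simpa [hg, Nat.cast_add, Nat.cast_one] using key
  have h0 : h 0 = 0 := by simp [hh]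
  have hN0 : h (m+3) = 0 := by simp [hh]
  have hval : ∀ e : ℕ, 1 ≤ e → e ≤ m+2 →
      h e = g e - e*(((m:ℝ)+3) - e) := by
    intro e he1 he2
    rw [hh]
    simp only []
    rw [if_neg (by omega)]
  have hrec' : ∀ d : ℕ, 1 ≤ d → d ≤ m+2 → h d = (h (d-1) + h (d+1))/2 := by
    intro d hd1 hd2
    have hgd := grec d hd1 hd2
    by_cases hA : d = 1
    · subst hA
      rw [if_neg (by omega), if_pos rfl] at hgd
      rw [hval 1 (by omega) (by omega), hval 2 (by omega) (by omega)]
      show _ = (h 0 + _)/2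
      rw [h0]
      push_cast
      linear_combination hgd
    · by_cases hB : d = m+2
      · subst hB
        rw [if_pos rfl, if_neg (by omega)] at hgd
        have hm1 : m + 2 - 1 = m + 1 := rfl
        rw [hval (m+2) (by omega) (by omega)]
        show _ = (h (m+1) + h (m+3))/2
        rw [hval (m+1) (by omega) (by omega), hN0]
        rw [hm1] at hgd
        push_cast
        linear_combination hgd
      · obtain ⟨e, rfl⟩ : ∃ e, d = e + 1 := ⟨d-1, by omega⟩
        rw [if_neg hB, if_neg hA] at hgd
        have hm1 : e + 1 - 1 = e := rfl
        rw [hm1] at hgd ⊢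
        rw [hval (e+1) (by omega) (by omega), hval e (by omega) (by omega),
          hval (e+2) (by omega) (by omega)]
        push_cast
        linear_combination hgd
  have hlin : ∀ d : ℕ, d ≤ m+3 → h d = d * h 1 := by
    intro d
    induction d using Nat.twoStepInduction with
    | zero => intro _; rw [h0]; simp
    | one => intro _; simp
    | more e ih1 ih2 =>
      intro hle
      have hr := hrec' (e+1) (by omega) (by omega)
      have he1 := ih1 (by omega)
      have he2 := ih2 (by omega)
      have hm1 : e + 1 - 1 = e := rfl
      rw [hm1] at hr
      push_cast
      push_cast at he1 he2
      linarith
  have h1zero : h 1 = 0 := by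
    have hz := hlin (m+3) le_rfl
    rw [hN0] at hz
    have hc : ((m+3 : ℕ) : ℝ) ≠ 0 := by positivity
    rcases mul_eq_zero.mp hz.symm with hc' | hh1
    · exact absurd hc' hc
    · exact hh1
  intro d hd1 hd2
  have hz := hlin d (by omega)
  rw [h1zero, mul_zero, hval d hd1 hd2] at hz
  have : g d = (d:ℝ) * (((m:ℝ)+3) - d) := by linarith
  rw [hg] at this
  simp only [] at this
  rw [this]

theorem sum_range_cast (n : ℕ) : ∑ d ∈ Finset.range n, (d:ℝ) = n*(n-1)/2 := by
  induction n with
  | zero => simp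
  | succ k ih => rw [Finset.sum_range_succ, ih]; push_cast; ring

theorem sum_range_sq_cast (n : ℕ) : ∑ d ∈ Finset.range n, (d:ℝ)^2 = n*(n-1)*(2*n-1)/6 := by
  induction n with
  | zero => simp
  | succ k ih => rw [Finset.sum_range_succ, ih]; push_cast; ring

theorem total_mfpt_cycle_random_walk {N : ℕ} (hN : 3 ≤ N)
    (P M : Matrix (Fin N) (Fin N) ℝ)
    (hP : ∀ i j : Fin N, P i j =
      if (j : ℕ) = ((i : ℕ) + 1) % N ∨ (j : ℕ) = ((i : ℕ) + N - 1) % N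
      then (1 : ℝ) / 2 else 0)
    (hM : IsMFPT P M) :
    ∑ i, ∑ j ∈ Finset.univ.filter (fun j => j ≠ i), M i j
      = ((N : ℝ) ^ 4 - (N : ℝ) ^ 2) / 6 := by
  obtain ⟨m, rfl⟩ : ∃ m, N = m + 3 := ⟨N - 3, by omega⟩
  have hrec := cycle_rec m P M hP hM
  have inner : ∀ i : Fin (m+3),
      ∑ j ∈ Finset.univ.filter (fun j => j ≠ i), M i j
        = ∑ d ∈ Finset.range (m+3), (d:ℝ) * (((m:ℝ)+3) - (d:ℝ)) := by
    intro i
    have step1 : ∑ j ∈ Finset.univ.filter (fun j => j ≠ i), M i j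
        = ∑ c : Fin (m+3), (if i - c ≠ i then M i (i - c) else 0) := by
      rw [Finset.sum_filter]
      exact (Fintype.sum_equiv (Equiv.subLeft i)
        (fun c => if i - c ≠ i then M i (i - c) else 0)
        (fun j => if j ≠ i then M i j else 0) (fun c => rfl)).symm
    rw [step1]
    have step2 : ∀ c : Fin (m+3),
        (if i - c ≠ i then M i (i - c) else 0)
          = ((c:ℕ):ℝ) * (((m:ℝ)+3) - ((c:ℕ):ℝ)) := by
      intro c
      by_cases hc : c = 0
      · subst hc; simp
      · have hcv : (c:ℕ) ≠ 0 := by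
          exact fun h => hc (Fin.ext (by rw [h]; simp))
        have hne : i - c ≠ i := by
          intro hq
          exact hc (by rwa [sub_eq_self] at hq)
        rw [if_pos hne]
        have key := cycle_col m M hrec (i - c) (c:ℕ) (by omega)
          (by have := c.isLt; omega)
        rw [Fin.cast_val_eq_self c, sub_add_cancel] at key
        rw [key]
    rw [Finset.sum_congr rfl (fun c _ => step2 c)]
    rw [Fin.sum_univ_eq_sum_range (fun d => ((d:ℕ):ℝ) * (((m:ℝ)+3) - ((d:ℕ):ℝ))) (m+3)]
  rw [Finset.sum_congr rfl (fun i _ => inner i), Finset.sum_const, Finset.card_univ,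
    Fintype.card_fin]
  have expand : ∑ d ∈ Finset.range (m+3), (d:ℝ) * (((m:ℝ)+3) - (d:ℝ))
      = ((m:ℝ)+3) * (∑ d ∈ Finset.range (m+3), (d:ℝ))
        - ∑ d ∈ Finset.range (m+3), (d:ℝ)^2 := by
    rw [Finset.mul_sum, ← Finset.sum_sub_distrib]
    exact Finset.sum_congr rfl (fun d _ => by ring)
  rw [expand, sum_range_cast, sum_range_sq_cast]
  push_cast
  ring
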